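/- The map sending a frequency congruent partition λ, with multiplicities m_i(λ) = i·e_i for each i ≥ 1, to the partition in which i² occurs with multiplicity e_i, is a size-preserving bijection from the set of frequency congruent partitions onto the set of partitions into perfect squares. -/
import Mathlib


/-- Frequency congruent multiset of positive parts: each part is positive and
every positive integer `i` divides the multiplicity of `i`. -/
def IsFreqCong (s : Multiset ℕ) : Prop :=
  (∀ x ∈ s, 0 < x) ∧ ∀ i : ℕ, 0 < i → i ∣ s.count i

/-- Partition into perfect squares: all parts are squares of positive integers. -/
def IsSquarePartition (s : Multiset ℕ) : Prop :=
  (∀ x ∈ s, 0 < x) ∧ ∀ x ∈ s, ∃ m : ℕ, 0 < m ∧ x = m * m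

/-- The map sending a partition with multiplicities `m_i = i · e_i` to the
partition in which `i²` occurs with multiplicity `e_i`. -/
def sqMap (s : Multiset ℕ) : Multiset ℕ :=
  ∑ i ∈ s.toFinset, Multiset.replicate (s.count i / i) (i * i)

lemma count_sqMap_sq (s : Multiset ℕ) (j : ℕ) :
    (sqMap s).count (j * j) = s.count j / j := by
  rw [sqMap, Multiset.count_sum']
  rw [Finset.sum_eq_single j]
  · by_cases h : j ∈ s.toFinset
    · simp [Multiset.count_replicate]
    · simp [Multiset.count_replicate, Multiset.count_eq_zero_of_notMem
        (fun hm => h (Multiset.mem_toFinset.mpr hm))]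
  · intro i hi hne
    rw [Multiset.count_replicate, if_neg]
    exact fun h => hne (Nat.mul_self_inj.mp h)
  · intro h
    rw [Multiset.count_eq_zero_of_notMem (fun hm => h (Multiset.mem_toFinset.mpr hm))]
    simp

lemma mem_sqMap (s : Multiset ℕ) {x : ℕ} (hx : x ∈ sqMap s) :
    ∃ i, i ∈ s ∧ x = i * i := by
  rw [sqMap, Multiset.mem_sum] at hx
  obtain ⟨i, hi, hx⟩ := hx
  rw [Multiset.eq_of_mem_replicate hx]
  exact ⟨i, Multiset.mem_toFinset.mp hi, rfl⟩

/-- inverse map -/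
def invMap (t : Multiset ℕ) : Multiset ℕ :=
  ∑ x ∈ t.toFinset, Multiset.replicate (Nat.sqrt x * t.count x) (Nat.sqrt x)

lemma mem_invMap (t : Multiset ℕ) {y : ℕ} (hy : y ∈ invMap t) :
    ∃ x, x ∈ t ∧ y = Nat.sqrt x := by
  rw [invMap, Multiset.mem_sum] at hy
  obtain ⟨x, hx, hy⟩ := hy
  rw [Multiset.eq_of_mem_replicate hy]
  exact ⟨x, Multiset.mem_toFinset.mp hx, rfl⟩

lemma count_invMap (t : Multiset ℕ) (ht : IsSquarePartition t) (j : ℕ) (_hj : 0 < j) :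
    (invMap t).count j = j * t.count (j * j) := by
  have hsq : ∀ x ∈ t.toFinset, Nat.sqrt x * Nat.sqrt x = x := by
    intro x hx
    obtain ⟨m, _, rfl⟩ := ht.2 x (Multiset.mem_toFinset.mp hx)
    rw [Nat.sqrt_eq]
  rw [invMap, Multiset.count_sum']
  rw [Finset.sum_eq_single (j * j)]
  · by_cases h : j * j ∈ t.toFinset
    · rw [Multiset.count_replicate, Nat.sqrt_eq, if_pos rfl]
    · rw [Multiset.count_eq_zero_of_notMem (fun hm => h (Multiset.mem_toFinset.mpr hm))]
      simp
  · intro x hx hne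
    rw [Multiset.count_replicate, if_neg]
    intro h
    apply hne
    rw [← hsq x hx, h]
  · intro h
    rw [Multiset.count_eq_zero_of_notMem (fun hm => h (Multiset.mem_toFinset.mpr hm))]
    simp

lemma invMap_freqCong (t : Multiset ℕ) (ht : IsSquarePartition t) : IsFreqCong (invMap t) := by
  constructor
  · intro y hy
    obtain ⟨x, hx, rfl⟩ := mem_invMap t hy
    obtain ⟨m, hm, rfl⟩ := ht.2 x hx
    rwa [Nat.sqrt_eq]
  · intro i hi
    rw [count_invMap t ht i hi]
    exact Dvd.intro _ rfl

lemma sqMap_invMap (t : Multiset ℕ) (ht : IsSquarePartition t) : sqMap (invMap t) = t := by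
  ext n
  by_cases hn : n ∈ t
  · obtain ⟨m, hm, rfl⟩ := ht.2 n hn
    rw [count_sqMap_sq, count_invMap t ht m hm, Nat.mul_div_cancel_left _ hm]
  · rw [Multiset.count_eq_zero_of_notMem hn, Multiset.count_eq_zero]
    intro h
    obtain ⟨i, hi, rfl⟩ := mem_sqMap _ h
    obtain ⟨x, hx, rfl⟩ := mem_invMap t hi
    obtain ⟨m, hm, rfl⟩ := ht.2 x hx
    rw [Nat.sqrt_eq] at hn
    exact hn hx

lemma sum_finsetSum (T : Finset ℕ) (f : ℕ → Multiset ℕ) :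
    (∑ i ∈ T, f i).sum = ∑ i ∈ T, (f i).sum :=
  map_sum Multiset.sumAddMonoidHom f T

lemma sqMap_sum (s : Multiset ℕ) (hs : IsFreqCong s) : (sqMap s).sum = s.sum := by
  conv_rhs => rw [← Multiset.toFinset_sum_count_nsmul_eq s]
  rw [sqMap, sum_finsetSum, sum_finsetSum]
  apply Finset.sum_congr rfl
  intro i hi
  have hi' : 0 < i := hs.1 i (Multiset.mem_toFinset.mp hi)
  rw [Multiset.sum_replicate, Multiset.sum_nsmul, Multiset.sum_singleton, smul_eq_mul,
    smul_eq_mul, ← mul_assoc, Nat.div_mul_cancel (hs.2 i hi')]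

theorem sqMap_bijOn_size_preserving :
    Set.BijOn sqMap {s : Multiset ℕ | IsFreqCong s} {t : Multiset ℕ | IsSquarePartition t}
      ∧ ∀ s : Multiset ℕ, IsFreqCong s → (sqMap s).sum = s.sum := by
  refine ⟨⟨?_, ?_, ?_⟩, fun s hs => sqMap_sum s hs⟩
  · intro s hs
    constructor
    · intro x hx
      obtain ⟨i, hi, rfl⟩ := mem_sqMap s hx
      have := hs.1 i hi
      positivity
    · intro x hx
      obtain ⟨i, hi, rfl⟩ := mem_sqMap s hx
      exact ⟨i, hs.1 i hi, rfl⟩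
  · intro s hs s' hs' h
    ext j
    rcases Nat.eq_zero_or_pos j with rfl | hj
    · rw [Multiset.count_eq_zero_of_notMem (fun hm => lt_irrefl 0 (hs.1 0 hm)),
        Multiset.count_eq_zero_of_notMem (fun hm => lt_irrefl 0 (hs'.1 0 hm))]
    · have h1 := count_sqMap_sq s j
      have h2 := count_sqMap_sq s' j
      rw [h] at h1
      rw [← Nat.div_mul_cancel (hs.2 j hj), ← Nat.div_mul_cancel (hs'.2 j hj), ← h1, ← h2]
  · intro t ht
    exact ⟨invMap t, invMap_freqCong t ht, sqMap_invMap t ht⟩
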